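/- Let B = {(b_k, β_k)}_{k=1}^K and B̃ = {(b̃_k, β̃_k)}_{k=1}^{K̃} be sets of parameters with all b_k, b̃_k nonzero, the β_k pairwise distinct, the β̃_k pairwise distinct, and K̃ ≤ K. If ∑_{k=1}^K b_k β_k^n = ∑_{k=1}^{K̃} b̃_k β̃_k^n for all 0 ≤ n < N with N ≥ 2K, then K̃ = K and the two sets of pairs {(b_k, β_k)} and {(b̃_k, β̃_k)} are equal. -/
import Mathlib

open Finset

theorem exponential_sum_identifiable
    (K K' N : ℕ) (hK' : K' ≤ K) (hN : 2 * K ≤ N)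
    (b β : Fin K → ℂ) (b' β' : Fin K' → ℂ)
    (hb : ∀ k, b k ≠ 0) (hb' : ∀ k, b' k ≠ 0)
    (hβ : Function.Injective β) (hβ' : Function.Injective β')
    (h : ∀ n : ℕ, n < N →
      ∑ k : Fin K, b k * β k ^ n = ∑ k : Fin K', b' k * β' k ^ n) :
    K' = K ∧
      Set.range (fun k : Fin K => (b k, β k)) =
        Set.range (fun k : Fin K' => (b' k, β' k)) := by
  classical
  set cb : ℂ → ℂ := fun γ => if h : ∃ k, β k = γ then b h.choose else 0 with hcbdef
  set cb' : ℂ → ℂ := fun γ => if h : ∃ k, β' k = γ then b' h.choose else 0 with hcb'def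
  have hcb : ∀ k, cb (β k) = b k := by
    intro k
    have hx : ∃ j, β j = β k := ⟨k, rfl⟩
    simp only [hcbdef, dif_pos hx]
    exact congrArg b (hβ hx.choose_spec)
  have hcb' : ∀ k, cb' (β' k) = b' k := by
    intro k
    have hx : ∃ j, β' j = β' k := ⟨k, rfl⟩
    simp only [hcb'def, dif_pos hx]
    exact congrArg b' (hβ' hx.choose_spec)
  set T : Finset ℂ := (univ.image β) ∪ (univ.image β') with hTdef
  have hTcard : T.card ≤ N := by
    calc T.card ≤ (univ.image β).card + (univ.image β').card := card_union_le _ _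
    _ ≤ K + K' := by
        rw [Finset.card_image_of_injective _ hβ, Finset.card_image_of_injective _ hβ']
        simp
    _ ≤ 2 * K := by omega
    _ ≤ N := hN
  have hsum : ∀ n : ℕ, n < N → ∑ γ ∈ T, (cb γ - cb' γ) * γ ^ n = 0 := by
    intro n hn
    have h1 : ∑ γ ∈ T, cb γ * γ ^ n = ∑ k : Fin K, b k * β k ^ n := by
      rw [← Finset.sum_subset (Finset.subset_union_left (s₂ := univ.image β'))]
      · rw [Finset.sum_image (fun a _ c _ hac => hβ hac)]
        exact Finset.sum_congr rfl fun k _ => by rw [hcb]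
      · intro γ _ hγ
        have hne : ¬ ∃ k, β k = γ := by simpa [Finset.mem_image] using hγ
        simp [hcbdef, dif_neg hne]
    have h2 : ∑ γ ∈ T, cb' γ * γ ^ n = ∑ k : Fin K', b' k * β' k ^ n := by
      rw [← Finset.sum_subset (Finset.subset_union_right (s₁ := univ.image β))]
      · rw [Finset.sum_image (fun a _ c _ hac => hβ' hac)]
        exact Finset.sum_congr rfl fun k _ => by rw [hcb']
      · intro γ _ hγ
        have hne : ¬ ∃ k, β' k = γ := by simpa [Finset.mem_image] using hγ
        simp [hcb'def, dif_neg hne]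
    simp only [sub_mul, Finset.sum_sub_distrib, h1, h2, h n hn, sub_self]
  -- Vandermonde step
  set v : Fin T.card → ℂ := fun i => (T.equivFin.symm i : ℂ) with hvdef
  have hvinj : Function.Injective v :=
    Subtype.val_injective.comp T.equivFin.symm.injective
  set c : Fin T.card → ℂ := fun i => cb (v i) - cb' (v i) with hcdef
  have hc0 : c = 0 := by
    apply Matrix.eq_zero_of_forall_pow_sum_mul_pow_eq_zero hvinj
    intro i
    have hiN : (i : ℕ) < N := lt_of_lt_of_le i.2 hTcard
    have := hsum i hiN
    rw [← this]
    calc ∑ j : Fin T.card, c j * v j ^ (i : ℕ)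
        = ∑ γ : T, (cb γ.1 - cb' γ.1) * γ.1 ^ (i : ℕ) :=
          Equiv.sum_comp T.equivFin.symm (fun γ : T => (cb γ.1 - cb' γ.1) * γ.1 ^ (i : ℕ))
      _ = ∑ γ ∈ T, (cb γ - cb' γ) * γ ^ (i : ℕ) :=
          Finset.sum_coe_sort T (fun γ => (cb γ - cb' γ) * γ ^ (i : ℕ))
  have hkey : ∀ γ : ℂ, cb γ = cb' γ := by
    intro γ
    by_cases hγ : γ ∈ T
    · obtain ⟨i, hi⟩ : ∃ i, v i = γ := ⟨T.equivFin ⟨γ, hγ⟩, by simp [hvdef]⟩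
      have := congrFun hc0 i
      simp only [hcdef, Pi.zero_apply, sub_eq_zero] at this
      rwa [hi] at this
    · have h1 : ¬ ∃ k, β k = γ := fun ⟨k, hk⟩ =>
        hγ (mem_union_left _ (Finset.mem_image.mpr ⟨k, Finset.mem_univ k, hk⟩))
      have h2 : ¬ ∃ k, β' k = γ := fun ⟨k, hk⟩ =>
        hγ (mem_union_right _ (Finset.mem_image.mpr ⟨k, Finset.mem_univ k, hk⟩))
      simp [hcbdef, hcb'def, dif_neg h1, dif_neg h2]
  have hrange : Set.range (fun k : Fin K => (b k, β k)) =
      Set.range (fun k : Fin K' => (b' k, β' k)) := by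
    apply Set.eq_of_subset_of_subset
    · rintro p ⟨k, rfl⟩
      have h1 : cb' (β k) = b k := by rw [← hkey, hcb]
      have h2 : ∃ j, β' j = β k := by
        by_contra hne
        rw [hcb'def] at h1
        simp only [dif_neg hne] at h1
        exact hb k h1.symm
      refine ⟨h2.choose, ?_⟩
      have hβeq : β' h2.choose = β k := h2.choose_spec
      have hbeq : b' h2.choose = b k := by rw [← hcb' h2.choose, hβeq, h1]
      simp [hβeq, hbeq]
    · rintro p ⟨k, rfl⟩
      have h1 : cb (β' k) = b' k := by rw [hkey, hcb']
      have h2 : ∃ j, β j = β' k := by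
        by_contra hne
        rw [hcbdef] at h1
        simp only [dif_neg hne] at h1
        exact hb' k h1.symm
      refine ⟨h2.choose, ?_⟩
      have hβeq : β h2.choose = β' k := h2.choose_spec
      have hbeq : b h2.choose = b' k := by rw [← hcb h2.choose, hβeq, h1]
      simp [hβeq, hbeq]
  refine ⟨?_, hrange⟩
  have hinj1 : Function.Injective (fun k : Fin K => (b k, β k)) :=
    fun x y hxy => hβ (congrArg Prod.snd hxy)
  have hinj2 : Function.Injective (fun k : Fin K' => (b' k, β' k)) :=
    fun x y hxy => hβ' (congrArg Prod.snd hxy)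
  have h1 := Nat.card_range_of_injective hinj1
  have h2 := Nat.card_range_of_injective hinj2
  rw [hrange] at h1
  have h3 := h1.symm.trans h2
  simpa [Nat.card_eq_fintype_card] using h3.symm
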